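/- arXiv:0901.1205 — 2 statements merged into one kernel-verified Lean document; each statement's English description precedes it below -/
import Mathlib

section
/- Let B₀, B₁, B₂, B₃ be commutative rings with ring homomorphisms j_δ : B_δ → B_{δ−1} for δ = 1, 2, 3. For each δ = 1, 2, 3 let A_δ be a commutative ring, f_δ : B_δ → A_δ a ring homomorphism, g_δ : A_δ → B_δ an additive group homomorphism, and c_δ ∈ A_δ a non-zero-divisor such that f_δ(g_δ(a)) = c_δ·a for all a ∈ A_δ and such that every b ∈ B_δ with j_δ(b) = 0 lies in the image of g_δ. Then the map B₃ → A₃ × A₂ × A₁ × B₀ sending b to (f₃(b), f₂(j₃(b)), f₁(j₂(j₃(b))), j₁(j₂(j₃(b)))) is injective. -/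
/-- Abstract form of Proposition `injleqtre`: the ring `B₃` (playing the role of
`A*(M₀^{≤3})⊗ℚ`) injects into `A₃ × A₂ × A₁ × B₀`, the product of the Chow rings of the
strata, given excision sequences and self-intersection formulas at each step. -/
theorem stmt_1 {B₀ B₁ B₂ B₃ A₁ A₂ A₃ : Type*}
    [CommRing B₀] [CommRing B₁] [CommRing B₂] [CommRing B₃]
    [CommRing A₁] [CommRing A₂] [CommRing A₃]
    (j₁ : B₁ →+* B₀) (j₂ : B₂ →+* B₁) (j₃ : B₃ →+* B₂)
    (f₁ : B₁ →+* A₁) (f₂ : B₂ →+* A₂) (f₃ : B₃ →+* A₃)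
    (g₁ : A₁ →+ B₁) (g₂ : A₂ →+ B₂) (g₃ : A₃ →+ B₃)
    (c₁ : A₁) (c₂ : A₂) (c₃ : A₃)
    (hc₁ : c₁ ∈ nonZeroDivisors A₁) (hc₂ : c₂ ∈ nonZeroDivisors A₂)
    (hc₃ : c₃ ∈ nonZeroDivisors A₃)
    (hfg₁ : ∀ a : A₁, f₁ (g₁ a) = c₁ * a)
    (hfg₂ : ∀ a : A₂, f₂ (g₂ a) = c₂ * a)
    (hfg₃ : ∀ a : A₃, f₃ (g₃ a) = c₃ * a)
    (hker₁ : ∀ b : B₁, j₁ b = 0 → ∃ a : A₁, g₁ a = b)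
    (hker₂ : ∀ b : B₂, j₂ b = 0 → ∃ a : A₂, g₂ a = b)
    (hker₃ : ∀ b : B₃, j₃ b = 0 → ∃ a : A₃, g₃ a = b) :
    Function.Injective
      (fun b : B₃ => (f₃ b, f₂ (j₃ b), f₁ (j₂ (j₃ b)), j₁ (j₂ (j₃ b)))) := by
  intro x y h
  simp only [Prod.mk.injEq] at h
  obtain ⟨h3, h2, h1, h0⟩ := h
  set b := x - y with hb
  have e3 : f₃ b = 0 := by simp [hb, sub_eq_zero, h3]
  have e2 : f₂ (j₃ b) = 0 := by simp [hb, sub_eq_zero, h2]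
  have e1 : f₁ (j₂ (j₃ b)) = 0 := by simp [hb, sub_eq_zero, h1]
  have e0 : j₁ (j₂ (j₃ b)) = 0 := by simp [hb, sub_eq_zero, h0]
  obtain ⟨a₁, ha₁⟩ := hker₁ _ e0
  have ha : a₁ * c₁ = 0 := by rw [mul_comm, ← hfg₁, ha₁, e1]
  have z1 : j₂ (j₃ b) = 0 := by rw [← ha₁, hc₁.2 a₁ ha, map_zero]
  obtain ⟨a₂, ha₂⟩ := hker₂ _ z1
  have hb2 : a₂ * c₂ = 0 := by rw [mul_comm, ← hfg₂, ha₂, e2]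
  have z2 : j₃ b = 0 := by rw [← ha₂, hc₂.2 a₂ hb2, map_zero]
  obtain ⟨a₃, ha₃⟩ := hker₃ _ z2
  have hb3 : a₃ * c₃ = 0 := by rw [mul_comm, ← hfg₃, ha₃, e3]
  have : b = 0 := by rw [← ha₃, hc₃.2 a₃ hb3, map_zero]
  exact sub_eq_zero.mp this
end

section
/- Let Γ and Γ' be finite trees (connected acyclic simple graphs) and let d be an ordered deformation of Γ into Γ', i.e. a surjective map from the vertices of Γ' to the vertices of Γ such that (1) whenever d(P) = d(Q), every vertex R on the unique path in Γ' from P to Q satisfies d(R) = d(P), and (2) for every edge {P,Q} of Γ' with d(P) ≠ d(Q), the pair {d(P), d(Q)} is an edge of Γ. Then for every edge {A,B} of Γ there exist adjacent vertices P, Q of Γ' with d(P) = A and d(Q) = B; consequently the number of edges of Γ is at most the number of edges of Γ'. -/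
open SimpleGraph

/-- Push a walk in `G'` forward along `d` to a walk in `G`, collapsing repeated values. -/
lemma push_walk_aux {V V' : Type*} (G : SimpleGraph V) (G' : SimpleGraph V')
    (d : V' → V)
    (h2 : ∀ P Q : V', G'.Adj P Q → d P ≠ d Q → G.Adj (d P) (d Q)) :
    ∀ {P Q : V'} (_ : G'.Walk P Q),
      ∃ w : G.Walk (d P) (d Q), ∀ e ∈ w.edges,
        ∃ R S : V', G'.Adj R S ∧ e = s(d R, d S) := by
  intro P Q p
  induction p with
  | nil => exact ⟨.nil, by simp⟩
  | @cons P R' Q h p ih =>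
    obtain ⟨w, hw⟩ := ih
    by_cases hd : d P = d R'
    · refine ⟨w.copy hd.symm rfl, ?_⟩
      simpa using hw
    · refine ⟨Walk.cons (h2 _ _ h hd) w, ?_⟩
      intro e he
      rw [Walk.edges_cons, List.mem_cons] at he
      rcases he with he | he
      · exact ⟨P, R', h, he⟩
      · exact hw e he

/-- If `d` is an ordered deformation of the finite tree `Γ` (graph `G` on `V`) into the
finite tree `Γ'` (graph `G'` on `V'`), then every edge `{A,B}` of `Γ` is the image of an
edge of `Γ'`; consequently `Γ` has at most as many edges as `Γ'`. -/
theorem stmt_9 {V V' : Type*} [Fintype V] [Fintype V']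
    (G : SimpleGraph V) (G' : SimpleGraph V')
    (hG : G.IsTree) (hG' : G'.IsTree)
    (d : V' → V) (hsurj : Function.Surjective d)
    (h1 : ∀ P Q : V', d P = d Q →
      ∀ p : G'.Walk P Q, p.IsPath → ∀ R ∈ p.support, d R = d P)
    (h2 : ∀ P Q : V', G'.Adj P Q → d P ≠ d Q → G.Adj (d P) (d Q)) :
    (∀ A B : V, G.Adj A B → ∃ P Q : V', G'.Adj P Q ∧ d P = A ∧ d Q = B) ∧
    G.edgeSet.ncard ≤ G'.edgeSet.ncard := by
  classical
  have key : ∀ A B : V, G.Adj A B → ∃ P Q : V', G'.Adj P Q ∧ d P = A ∧ d Q = B := by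
    intro A B hAB
    obtain ⟨P, hP⟩ := hsurj A
    obtain ⟨Q, hQ⟩ := hsurj B
    obtain ⟨p⟩ := hG'.isConnected P Q
    obtain ⟨w, hw⟩ := push_walk_aux G G' d h2 p
    -- cast w to a walk from A to B
    let w' : G.Walk A B := (w.copy hP hQ)
    have hw' : ∀ e ∈ w'.edges, ∃ R S : V', G'.Adj R S ∧ e = s(d R, d S) := by
      simpa [w'] using hw
    -- the edge s(A,B) appears in w'
    have hmem : s(A, B) ∈ w'.edges := by
      have hpath : (Walk.cons hAB Walk.nil : G.Walk A B).IsPath := by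
        simp [hAB.ne]
      obtain ⟨q, hq, huniq⟩ := hG.existsUnique_path A B
      have h1' : (w'.toPath : G.Walk A B) = q := huniq _ w'.toPath.2
      have h2' : (Walk.cons hAB Walk.nil : G.Walk A B) = q := huniq _ hpath
      have : s(A, B) ∈ (w'.toPath : G.Walk A B).edges := by
        rw [h1', ← h2']
        simp
      exact Walk.edges_toPath_subset w' this
    obtain ⟨R, S, hRS, heq⟩ := hw' _ hmem
    rw [Sym2.eq_iff] at heq
    rcases heq with ⟨hA, hB⟩ | ⟨hA, hB⟩
    · exact ⟨R, S, hRS, hA.symm, hB.symm⟩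
    · exact ⟨S, R, hRS.symm, hA.symm, hB.symm⟩
  refine ⟨key, ?_⟩
  rcases Set.eq_empty_or_nonempty G.edgeSet with hempty | ⟨e0, he0⟩
  · simp [hempty]
  · have hex : ∀ e ∈ G.edgeSet, ∃ e' ∈ G'.edgeSet, Sym2.map d e' = e := by
      intro e he
      induction e with
      | h A B =>
        obtain ⟨P, Q, hPQ, hA, hB⟩ := key A B he
        exact ⟨s(P, Q), hPQ, by simp [hA, hB]⟩
    choose f hf1 hf2 using hex
    classical
    let F : Sym2 V → Sym2 V' := fun e => if h : e ∈ G.edgeSet then f e h else f e0 he0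
    refine Set.ncard_le_ncard_of_injOn F ?_ ?_ (Set.toFinite _)
    · intro e he
      simp only [F, dif_pos he]
      exact hf1 e he
    · intro e1 h1' e2 h2' hFeq
      have : Sym2.map d (F e1) = Sym2.map d (F e2) := by rw [hFeq]
      simpa only [F, dif_pos h1', dif_pos h2', hf2] using this
end
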